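/- Let M be a 2×2 integer matrix such that for all coprime integers a, b, the two entries of the vector M·(a, b)ᵀ are coprime. Then M is in GL(2, ℤ), i.e. det M = ±1. -/
import Mathlib

/-- Lift a nonzero pair mod a prime `p` to a coprime pair of integers,
assuming the first coordinate is nonzero. -/
lemma lift_aux (p : ℕ) [hp : Fact p.Prime] (a0 b0 : ZMod p) (ha : a0 ≠ 0) :
    ∃ a b : ℤ, IsCoprime a b ∧ (a : ZMod p) = a0 ∧ (b : ZMod p) = b0 := by
  set a : ℤ := (a0.val : ℤ) with hadef
  have hacast : (a : ZMod p) = a0 := by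
    simp [hadef, ZMod.natCast_val, ZMod.cast_id]
  have hvalne : a0.val ≠ 0 := fun hv => ha ((ZMod.val_eq_zero a0).mp hv)
  have hvallt : a0.val < p := ZMod.val_lt a0
  have hnd : ¬ p ∣ a0.val := Nat.not_dvd_of_pos_of_lt (Nat.pos_of_ne_zero hvalne) hvallt
  have hcop : IsCoprime a (p : ℤ) := by
    rw [hadef, Nat.isCoprime_iff_coprime]
    exact ((Nat.Prime.coprime_iff_not_dvd hp.out).mpr hnd).symm
  obtain ⟨u, v, huv⟩ := hcop
  refine ⟨a, (b0.val : ℤ) * u * a + v * p, ⟨u - (b0.val : ℤ) * u, 1, by ring_nf; linarith [huv]⟩,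
    hacast, ?_⟩
  have hua : ((u : ZMod p)) * (a : ZMod p) = 1 := by
    have := congrArg (fun x : ℤ => (x : ZMod p)) huv
    push_cast at this
    simpa using this
  push_cast
  rw [show ((b0.val : ZMod p)) = b0 from by simp [ZMod.natCast_val, ZMod.cast_id]]
  rw [ZMod.natCast_self]
  ring_nf
  rw [mul_assoc, hua, mul_one]

theorem stmt_10 (M : Matrix (Fin 2) (Fin 2) ℤ)
    (h : ∀ a b : ℤ, IsCoprime a b →
      IsCoprime (M 0 0 * a + M 0 1 * b) (M 1 0 * a + M 1 1 * b)) :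
    M.det = 1 ∨ M.det = -1 := by
  by_contra hc
  push_neg at hc
  have hnat : M.det.natAbs ≠ 1 := by
    rcases Int.natAbs_eq M.det with he | he <;> omega
  obtain ⟨q, hq, hqd⟩ := Int.exists_prime_and_dvd hnat
  set p := q.natAbs with hpdef
  have hpp : p.Prime := Int.prime_iff_natAbs_prime.mp hq
  haveI : Fact p.Prime := ⟨hpp⟩
  have hpd : (p : ℤ) ∣ M.det := Int.natAbs_dvd.mpr hqd
  set N : Matrix (Fin 2) (Fin 2) (ZMod p) := M.map (Int.cast : ℤ → ZMod p) with hN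
  have hNdet : N.det = 0 := by
    have hmd := RingHom.map_det (Int.castRingHom (ZMod p)) M
    simp only [RingHom.mapMatrix_apply] at hmd
    rw [hN]
    rw [show (M.map (Int.cast : ℤ → ZMod p)) = M.map (Int.castRingHom (ZMod p)) from rfl, ← hmd]
    exact (ZMod.intCast_zmod_eq_zero_iff_dvd _ _).mpr hpd
  obtain ⟨w, hw0, hww⟩ := (Matrix.exists_mulVec_eq_zero_iff).mpr hNdet
  have hvne : w 0 ≠ 0 ∨ w 1 ≠ 0 := by
    by_contra hcon
    push_neg at hcon
    apply hw0
    funext i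
    fin_cases i <;> simp [hcon.1, hcon.2]
  have key : ∀ a b : ℤ, IsCoprime a b → (a : ZMod p) = w 0 → (b : ZMod p) = w 1 → False := by
    intro a b hab hca hcb
    obtain ⟨x, y, hxy⟩ := h a b hab
    have h0 : ((M 0 0 * a + M 0 1 * b : ℤ) : ZMod p) = 0 := by
      have := congrFun hww 0
      simp [Matrix.mulVec, dotProduct, Fin.sum_univ_two, hN, Matrix.map_apply] at this
      push_cast
      rw [hca, hcb]
      convert this using 1
    have h1 : ((M 1 0 * a + M 1 1 * b : ℤ) : ZMod p) = 0 := by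
      have := congrFun hww 1
      simp [Matrix.mulVec, dotProduct, Fin.sum_univ_two, hN, Matrix.map_apply] at this
      push_cast
      rw [hca, hcb]
      convert this using 1
    have hd0 : (p : ℤ) ∣ (M 0 0 * a + M 0 1 * b) := (ZMod.intCast_zmod_eq_zero_iff_dvd _ p).mp h0
    have hd1 : (p : ℤ) ∣ (M 1 0 * a + M 1 1 * b) := (ZMod.intCast_zmod_eq_zero_iff_dvd _ p).mp h1
    have : (p : ℤ) ∣ 1 := by
      rw [← hxy]
      exact dvd_add (Dvd.dvd.mul_left hd0 x) (Dvd.dvd.mul_left hd1 y)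
    have := Int.le_of_dvd one_pos this
    have := hpp.one_lt
    omega
  rcases hvne with hv | hv
  · obtain ⟨a, b, hab, hca, hcb⟩ := lift_aux p (w 0) (w 1) hv
    exact key a b hab hca hcb
  · obtain ⟨b, a, hab, hcb, hca⟩ := lift_aux p (w 1) (w 0) hv
    exact key a b hab.symm hca hcb
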